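/- Let A be a simple unital C*-algebra, let G be a finite group, let α : G → Aut(A) be an action of G on A, and let ω be a free ultrafilter on ℕ. Then α has the tracial Rokhlin property if and only if: for every finite subset F ⊂ A, every ε > 0, and every nonzero positive x ∈ A, there exist elements f_g ∈ ℓ∞(A) (g ∈ G) with each f_g(k) a projection and f_g(k) f_h(k) = 0 for all k whenever g ≠ h, such that, with f(k) = Σ_{g∈G} f_g(k): (a) lim_ω ‖f_g(k) a − a f_g(k)‖ < ε for all g ∈ G and all a ∈ F; (b) lim_ω ‖α_g(f_h(k)) − f_{gh}(k)‖ < ε for all g, h ∈ G; (c) for every δ > 0 there exists a bounded sequence (v_k) in A with lim_ω ‖(1 − f(k) − ε)₊ − v_k x v_k*‖ < δ; (d) lim_ω ‖f(k)‖ > 1 − ε. -/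

import Mathlib

open Filter Topology

set_option maxHeartbeats 1000000

/-- Cuntz subequivalence: `a ≾ b` iff there is a sequence `vₙ` with `‖a - vₙ b vₙ*‖ → 0`. -/
def CuntzSubeq {A : Type*} [NonUnitalRing A] [StarRing A] [Norm A] (a b : A) : Prop :=
  ∃ v : ℕ → A, Filter.Tendsto (fun n => ‖a - v n * b * star (v n)‖) Filter.atTop (nhds (0 : ℝ))

/-- A projection in a C*-algebra: a self-adjoint idempotent. -/
def IsProjection {A : Type*} [Mul A] [Star A] (p : A) : Prop :=
  star p = p ∧ p * p = p

/-- `(a - ε)₊`, via the continuous functional calculus applied to `t ↦ max (t - ε) 0`. -/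
noncomputable def cutDown {A : Type*} [CStarAlgebra A] (a : A) (ε : ℝ) : A :=
  cfc (fun t : ℝ => max (t - ε) 0) a

section Aux

variable {A : Type*} [CStarAlgebra A]

lemma IsProjection.isSelfAdjoint {p : A} (hp : IsProjection p) : IsSelfAdjoint p := hp.1

lemma IsProjection.norm_le_one {p : A} (hp : IsProjection p) : ‖p‖ ≤ 1 := by
  by_contra h
  push_neg at h
  have h1 : ‖p‖ * ‖p‖ = ‖p‖ := by
    calc ‖p‖ * ‖p‖ = ‖star p * p‖ := (CStarRing.norm_star_mul_self).symm
    _ = ‖p‖ := by rw [hp.1, hp.2]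
  nlinarith [norm_nonneg p]

lemma IsProjection.one_sub {p : A} (hp : IsProjection p) : IsProjection (1 - p) := by
  constructor
  · simp [star_sub, hp.1]
  · simp only [mul_sub, sub_mul, mul_one, one_mul, hp.2]
    abel

lemma IsProjection.spectrum_subset {p : A} (hp : IsProjection p) :
    spectrum ℝ p ⊆ {0, 1} := by
  intro t ht
  by_contra hmem
  simp only [Set.mem_insert_iff, Set.mem_singleton_iff] at hmem
  push_neg at hmem
  obtain ⟨ht0, ht1⟩ := hmem
  apply spectrum.notMem_iff.mpr ?_ ht
  have hne : t * (t - 1) ≠ 0 := mul_ne_zero ht0 (sub_ne_zero.mpr ht1)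
  refine ⟨⟨algebraMap ℝ A t - p, (t * (t - 1))⁻¹ • ((t - 1) • (1 : A) + p), ?_, ?_⟩, rfl⟩
  · have key : (algebraMap ℝ A t - p) * ((t - 1) • (1 : A) + p) = (t * (t - 1)) • (1 : A) := by
      rw [Algebra.algebraMap_eq_smul_one]
      simp only [sub_mul, mul_add, smul_mul_assoc, mul_smul_comm, one_mul, mul_one, hp.2]
      module
    rw [mul_smul_comm, key, smul_smul, inv_mul_cancel₀ hne, one_smul]
  · have key : ((t - 1) • (1 : A) + p) * (algebraMap ℝ A t - p) = (t * (t - 1)) • (1 : A) := by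
      rw [Algebra.algebraMap_eq_smul_one]
      simp only [sub_mul, mul_sub, add_mul, smul_mul_assoc, mul_smul_comm, one_mul, mul_one, hp.2]
      module
    rw [smul_mul_assoc, key, smul_smul, inv_mul_cancel₀ hne, one_smul]

lemma IsProjection.cutDown_eq {p : A} (hp : IsProjection p) {ε : ℝ} (hε : 0 ≤ ε) :
    cutDown p ε = (max (1 - ε) 0) • p := by
  have h1 : cutDown p ε = cfc (fun t : ℝ => (max (1 - ε) 0) * t) p := by
    refine cfc_congr fun t ht => ?_
    rcases hp.spectrum_subset ht with h | h <;> simp_all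
  rw [h1]
  have h2 : (fun t : ℝ => (max (1 - ε) 0) * t) = fun t : ℝ => (max (1 - ε) 0) • t := rfl
  rw [h2, cfc_smul_id (max (1 - ε) 0) p hp.isSelfAdjoint]

end Aux

section Aux2

variable {A : Type*} [CStarAlgebra A]

lemma isProjection_sum {G : Type*} [Fintype G] (f : G → A)
    (hproj : ∀ g, IsProjection (f g)) (horth : ∀ g h, g ≠ h → f g * f h = 0) :
    IsProjection (∑ g, f g) := by
  constructor
  · rw [star_sum]
    exact Finset.sum_congr rfl fun g _ => (hproj g).1
  · rw [Finset.sum_mul_sum]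
    refine Finset.sum_congr rfl fun g _ => ?_
    rw [Finset.sum_eq_single g (fun h _ hh => horth g h (Ne.symm hh)) (by simp)]
    exact (hproj g).2

variable [PartialOrder A] [StarOrderedRing A]

lemma IsProjection.nonneg {p : A} (hp : IsProjection p) : 0 ≤ p := by
  have := star_mul_self_nonneg p
  rwa [hp.1, hp.2] at this

lemma real_smul_nonneg {r : ℝ} (hr : 0 ≤ r) {a : A} (ha : 0 ≤ a) : 0 ≤ r • a := by
  have h := star_left_conjugate_nonneg ha (Real.sqrt r • (1 : A))
  have : star (Real.sqrt r • (1 : A)) * a * (Real.sqrt r • (1 : A)) = r • a := by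
    rw [star_smul, star_one]
    simp only [star_trivial, smul_mul_assoc, mul_smul_comm, one_mul, mul_one, smul_smul]
    rw [Real.mul_self_sqrt hr]
  rwa [this] at h

lemma commute_cfc_left {a b : A} (ha : IsSelfAdjoint a) (hab : Commute a b) (f : ℝ → ℝ) :
    Commute (cfc f a) b := by
  refine cfc_cases (fun x => Commute x b) a f (Commute.zero_left b) fun hf ha' => ?_
  suffices h : ∀ φ : C(spectrum ℝ a, ℝ), Commute (cfcHom ha' φ) b from h _
  intro φ
  let S : Subalgebra ℝ C(spectrum ℝ a, ℝ) :=
  { carrier := {ψ | Commute (cfcHom ha' ψ) b}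
    mul_mem' := fun hx hy => by
      simp only [Set.mem_setOf_eq, map_mul] at *
      exact hx.mul_left hy
    add_mem' := fun hx hy => by
      simp only [Set.mem_setOf_eq, map_add] at *
      exact hx.add_left hy
    one_mem' := by
      simp only [Set.mem_setOf_eq, map_one]
      exact Commute.one_left b
    zero_mem' := by
      simp only [Set.mem_setOf_eq, map_zero]
      exact Commute.zero_left b
    algebraMap_mem' := fun r => by
      simp only [Set.mem_setOf_eq, AlgHomClass.commutes]
      exact Algebra.commute_algebraMap_left r b }
  have hSclosed : IsClosed (S : Set C(spectrum ℝ a, ℝ)) := by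
    have hcont : Continuous (fun ψ : C(spectrum ℝ a, ℝ) =>
        cfcHom ha' ψ * b - b * cfcHom ha' ψ) := by
      have h1 : Continuous (cfcHom ha' (R := ℝ) : C(spectrum ℝ a, ℝ) → A) :=
        cfcHom_continuous ha'
      fun_prop
    have : (S : Set C(spectrum ℝ a, ℝ)) =
        (fun ψ : C(spectrum ℝ a, ℝ) => cfcHom ha' ψ * b - b * cfcHom ha' ψ) ⁻¹' {0} := by
      ext ψ
      simp only [Set.mem_preimage, Set.mem_singleton_iff, sub_eq_zero]
      exact Iff.rfl
    rw [this]
    exact isClosed_singleton.preimage hcont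
  have hX : (Polynomial.toContinuousMapOnAlgHom (spectrum ℝ a) Polynomial.X) ∈ S := by
    have hXa : cfcHom ha' (Polynomial.toContinuousMapOnAlgHom (spectrum ℝ a) Polynomial.X) = a := by
      have : (Polynomial.toContinuousMapOnAlgHom (spectrum ℝ a) Polynomial.X) =
          (ContinuousMap.id ℝ).restrict (spectrum ℝ a) := by
        ext z
        simp [Polynomial.toContinuousMapOnAlgHom, Polynomial.toContinuousMapOn,
          Polynomial.toContinuousMap]
      rw [this, cfcHom_id ha']
    show Commute _ b
    rw [hXa]
    exact hab
  have hpoly : polynomialFunctions (spectrum ℝ a) ≤ S := by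
    rw [polynomialFunctions.eq_adjoin_X]
    exact Algebra.adjoin_le (by simpa using hX)
  have hmem : φ ∈ closure (polynomialFunctions (spectrum ℝ a) : Set C(spectrum ℝ a, ℝ)) := by
    have := polynomialFunctions.topologicalClosure (spectrum ℝ a)
    have hφ : φ ∈ (polynomialFunctions (spectrum ℝ a)).topologicalClosure := this ▸ trivial
    exact hφ
  have : φ ∈ closure (S : Set C(spectrum ℝ a, ℝ)) := closure_mono hpoly hmem
  rwa [hSclosed.closure_eq] at this

end Aux2

section Aux3

variable {A : Type*} [CStarAlgebra A] [PartialOrder A] [StarOrderedRing A]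

lemma exists_conj_eq {p x v₀ : A} (hp : IsProjection p) (hx : 0 ≤ x)
    {c : ℝ} (hc : 0 < c) (hclose : ‖c • p - v₀ * x * star v₀‖ < c / 2) :
    ∃ w : A, p = w * x * star w := by
  set b := v₀ * x * star v₀ with hbdef
  have hbsa : star b = b := by
    simp only [hbdef, star_mul, star_star, hx.isSelfAdjoint.star_eq, mul_assoc]
  set z := p * b * p with hzdef
  have hpp := hp.2
  have hpsa := hp.1
  have hzsa : star z = z := by
    have h1 : star z = star p * (star b * star p) := by rw [hzdef, star_mul, star_mul]
    rw [h1, hbsa, hpsa, ← mul_assoc]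
  have hpz : p * z = z := by rw [hzdef, ← mul_assoc, ← mul_assoc, hpp]
  have hzp : z * p = z := by rw [hzdef, mul_assoc, hpp]
  have hnorm : ‖c • p - z‖ < c / 2 := by
    have hrw : c • p - z = p * (c • p - b) * p := by
      simp only [mul_sub, sub_mul, hzdef]
      rw [mul_smul_comm, smul_mul_assoc, ← mul_assoc, hpp, hpp]
    calc ‖c • p - z‖ = ‖p * (c • p - b) * p‖ := by rw [hrw]
      _ ≤ ‖p * (c • p - b)‖ * ‖p‖ := norm_mul_le _ _
      _ ≤ ‖p‖ * ‖c • p - b‖ * ‖p‖ :=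
        mul_le_mul_of_nonneg_right (norm_mul_le _ _) (norm_nonneg _)
      _ ≤ 1 * ‖c • p - b‖ * 1 := by
        have h1 := hp.norm_le_one
        gcongr
      _ = ‖c • p - b‖ := by ring
      _ < c / 2 := hclose
  set m := p - c⁻¹ • z with hmdef
  have hm : ‖m‖ < 1 / 2 := by
    have hrw : m = c⁻¹ • (c • p - z) := by
      rw [hmdef, smul_sub, smul_smul, inv_mul_cancel₀ hc.ne', one_smul]
    rw [hrw, norm_smul, Real.norm_eq_abs, abs_of_pos (inv_pos.mpr hc)]
    calc c⁻¹ * ‖c • p - z‖ < c⁻¹ * (c / 2) :=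
      mul_lt_mul_of_pos_left hnorm (inv_pos.mpr hc)
      _ = 1 / 2 := by field_simp
  have hm' : ‖m‖ ≤ 1 / 2 := le_of_lt hm
  have hpm : p * m = m := by
    rw [hmdef, mul_sub, hpp, mul_smul_comm, hpz]
  have hmp : m * p = m := by
    rw [hmdef, sub_mul, hpp, smul_mul_assoc, hzp]
  have hmsa : star m = m := by
    rw [hmdef, star_sub, hpsa, star_smul, star_trivial, hzsa]
  -- summability
  have hsum : Summable (fun j : ℕ => m ^ (j + 1)) := by
    apply Summable.of_norm_bounded (g := fun j : ℕ => (1/2 : ℝ) ^ (j + 1))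
    · exact (summable_geometric_of_lt_one (by norm_num) (by norm_num)).comp_injective
        (add_left_injective 1)
    · intro j
      calc ‖m ^ (j + 1)‖ ≤ ‖m‖ ^ (j + 1) := norm_pow_le' m (Nat.succ_pos j)
        _ ≤ (1/2) ^ (j + 1) := pow_le_pow_left₀ (norm_nonneg m) hm' (j + 1)
  set S := ∑' j : ℕ, m ^ (j + 1) with hSdef
  have hppow : ∀ j : ℕ, p * m ^ (j + 1) = m ^ (j + 1) := fun j => by
    rw [pow_succ' m j, ← mul_assoc, hpm]
  have hpowp : ∀ j : ℕ, m ^ (j + 1) * p = m ^ (j + 1) := fun j => by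
    rw [pow_succ m j, mul_assoc, hmp]
  have hpS : p * S = S := by
    rw [hSdef, ← hsum.tsum_mul_left p]
    exact tsum_congr hppow
  have hSp : S * p = S := by
    rw [hSdef, ← hsum.tsum_mul_right p]
    exact tsum_congr hpowp
  have hshift : S = m + ∑' j : ℕ, m ^ (j + 2) := by
    have h0 := Summable.tsum_eq_zero_add hsum
    simpa [pow_one] using h0
  have hmS : m * S = S - m := by
    have : m * S = ∑' j : ℕ, m ^ (j + 2) := by
      rw [hSdef, ← hsum.tsum_mul_left m]
      exact tsum_congr fun j => by rw [← pow_succ' m (j + 1)]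
    rw [this]
    rw [hshift]
    abel
  have hSm : S * m = S - m := by
    have : S * m = ∑' j : ℕ, m ^ (j + 2) := by
      rw [hSdef, ← hsum.tsum_mul_right m]
      exact tsum_congr fun j => by rw [← pow_succ m (j + 1)]
    rw [this, hshift]
    abel
  have key1 : (p - m) * (p + S) = p := by
    have hexp : (p - m) * (p + S) = p * p + p * S - (m * p + m * S) := by noncomm_ring
    rw [hexp, hpp, hpS, hmp, hmS]
    abel
  have key2 : (p + S) * (p - m) = p := by
    have hexp : (p + S) * (p - m) = p * p - p * m + (S * p - S * m) := by noncomm_ring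
    rw [hexp, hpp, hSp, hpm, hSm]
    abel
  have hzm : z = c • (p - m) := by
    have hcm : c • m = c • p - z := by
      rw [hmdef, smul_sub, smul_smul, mul_inv_cancel₀ hc.ne', one_smul]
    rw [smul_sub, hcm]
    abel
  set I := c⁻¹ • (p + S) with hIdef
  have hIz : I * z = p := by
    rw [hIdef, hzm, smul_mul_assoc, mul_smul_comm, key2, smul_smul,
      inv_mul_cancel₀ hc.ne', one_smul]
  have hzI : z * I = p := by
    rw [hIdef, hzm, smul_mul_assoc, mul_smul_comm, key1, smul_smul,
      mul_inv_cancel₀ hc.ne', one_smul]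
  have hIp : I * p = I := by
    rw [hIdef, smul_mul_assoc, add_mul, hpp, hSp]
  have hpI : p * I = I := by
    rw [hIdef, mul_smul_comm, mul_add, hpp, hpS]
  have hSsa : star S = S := by
    rw [hSdef, tsum_star]
    exact tsum_congr fun j => by rw [star_pow, hmsa]
  have hIsa : IsSelfAdjoint I := by
    rw [IsSelfAdjoint, hIdef, star_smul, star_trivial, star_add, hpsa, hSsa]
  have hIzI : I * z * I = I := by rw [hIz, hpI]
  have hIform : I = (I * v₀) * x * star (I * v₀) := by
    have h1 : I * z * I = (I * v₀) * x * star (I * v₀) := by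
      rw [star_mul, hIsa.star_eq, hzdef]
      calc I * (p * b * p) * I = ((I * p) * b) * (p * I) := by
            simp only [mul_assoc]
        _ = (I * b) * I := by rw [hIp, hpI]
        _ = I * v₀ * x * (star v₀ * I) := by
            rw [hbdef]
            simp only [mul_assoc]
    rw [← h1, hIzI]
  have hInn : (0 : A) ≤ I := by
    rw [hIform]
    exact star_right_conjugate_nonneg hx (I * v₀)
  set J := cfc Real.sqrt I with hJdef
  have hJsa : IsSelfAdjoint J := cfc_predicate Real.sqrt I
  have hJJ : J * J = I := by
    rw [hJdef, ← cfc_mul Real.sqrt Real.sqrt I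
      Real.continuous_sqrt.continuousOn Real.continuous_sqrt.continuousOn]
    calc cfc (fun t : ℝ => Real.sqrt t * Real.sqrt t) I
        = cfc (id : ℝ → ℝ) I := cfc_congr fun t ht =>
          Real.mul_self_sqrt (spectrum_nonneg_of_nonneg hInn ht)
      _ = I := cfc_id ℝ I hIsa
  have hcommIz : Commute I z := by
    unfold Commute SemiconjBy
    rw [hIz, hzI]
  have hJz : Commute J z := commute_cfc_left hIsa hcommIz Real.sqrt
  refine ⟨J * p * v₀, ?_⟩
  have hstarw : star (J * p * v₀) = star v₀ * p * J := by
    simp only [star_mul, hpsa, hJsa.star_eq, mul_assoc]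
  rw [hstarw]
  have hfinal : J * z * J = p := by
    rw [hJz.eq, mul_assoc, hJJ, hzI]
  calc p = J * z * J := hfinal.symm
    _ = J * p * v₀ * x * (star v₀ * p * J) := by
      rw [hzdef, hbdef]
      simp only [mul_assoc]

end Aux3

section Aux4

variable {A : Type*} [CStarAlgebra A]

lemma listmap_mul_left (y r : A) (l : List (A × A)) :
    ((l.map fun cd => (r * cd.1, cd.2)).map fun cd => cd.1 * y * cd.2).sum =
      r * (l.map fun cd => cd.1 * y * cd.2).sum := by
  induction l with
  | nil => simp
  | cons hd tl ih =>
    simp only [List.map_cons, List.sum_cons, ih, mul_add]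
    noncomm_ring

lemma listmap_mul_right (y r : A) (l : List (A × A)) :
    ((l.map fun cd => (cd.1, cd.2 * r)).map fun cd => cd.1 * y * cd.2).sum =
      (l.map fun cd => cd.1 * y * cd.2).sum * r := by
  induction l with
  | nil => simp
  | cons hd tl ih =>
    simp only [List.map_cons, List.sum_cons, ih, add_mul]
    noncomm_ring

lemma listmap_neg (y : A) (l : List (A × A)) :
    ((l.map fun cd => (-cd.1, cd.2)).map fun cd => cd.1 * y * cd.2).sum =
      -(l.map fun cd => cd.1 * y * cd.2).sum := by
  induction l with
  | nil => simp
  | cons hd tl ih => simp only [List.map_cons, List.sum_cons, neg_add, ih, neg_mul]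

lemma exists_list_approx_one
    (hA : ∀ I : TwoSidedIdeal A, IsClosed (I : Set A) → I = ⊥ ∨ I = ⊤)
    {y : A} (hy : y ≠ 0) :
    ∃ l : List (A × A), ‖1 - (l.map fun cd => cd.1 * y * cd.2).sum‖ < 1/4 := by
  set T : Set A := {a | ∃ l : List (A × A), a = (l.map fun cd => cd.1 * y * cd.2).sum} with hT
  have hzero : (0 : A) ∈ T := ⟨[], by simp⟩
  have hadd : ∀ {a b : A}, a ∈ T → b ∈ T → a + b ∈ T := by
    rintro a b ⟨l₁, rfl⟩ ⟨l₂, rfl⟩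
    exact ⟨l₁ ++ l₂, by simp⟩
  have hneg : ∀ {a : A}, a ∈ T → -a ∈ T := by
    rintro a ⟨l, rfl⟩
    exact ⟨l.map fun cd => (-cd.1, cd.2), (listmap_neg y l).symm⟩
  have hmull : ∀ (r : A), ∀ {a : A}, a ∈ T → r * a ∈ T := by
    rintro r a ⟨l, rfl⟩
    exact ⟨l.map fun cd => (r * cd.1, cd.2), (listmap_mul_left y r l).symm⟩
  have hmulr : ∀ (r : A), ∀ {a : A}, a ∈ T → a * r ∈ T := by
    rintro r a ⟨l, rfl⟩
    exact ⟨l.map fun cd => (cd.1, cd.2 * r), (listmap_mul_right y r l).symm⟩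
  let I : TwoSidedIdeal A := TwoSidedIdeal.mk' (closure T)
    (subset_closure hzero)
    (fun hx hy' => map_mem_closure₂ continuous_add hx hy' fun _ ha _ hb => hadd ha hb)
    (fun hx => map_mem_closure continuous_neg hx fun _ ha => hneg ha)
    (fun {x' y'} hy' => map_mem_closure (continuous_mul_left x') hy' fun _ ha => hmull x' ha)
    (fun {x' y'} hx =>
      map_mem_closure (f := fun b => b * y') (continuous_mul_right y') hx
        fun _ ha => hmulr y' ha)
  have hclosed : IsClosed (I : Set A) := by
    have hIT : (I : Set A) = closure T := TwoSidedIdeal.coe_mk' _ _ _ _ _ _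
    rw [hIT]
    exact isClosed_closure
  have hyI : y ∈ I := by
    show y ∈ TwoSidedIdeal.mk' _ _ _ _ _ _
    rw [TwoSidedIdeal.mem_mk']
    exact subset_closure ⟨[(1, 1)], by simp⟩
  rcases hA I hclosed with hbot | htop
  · rw [hbot, TwoSidedIdeal.mem_bot] at hyI
    exact absurd hyI hy
  · have h1 : (1 : A) ∈ I := by rw [htop]; exact TwoSidedIdeal.mem_top A
    have h1' : (1 : A) ∈ closure T := by
      rw [show I = TwoSidedIdeal.mk' (closure T) (subset_closure hzero) _ _ _ _ from rfl,
        TwoSidedIdeal.mem_mk'] at h1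
      exact h1
    obtain ⟨s, hsT, hdist⟩ := Metric.mem_closure_iff.mp h1' (1/4) (by norm_num)
    obtain ⟨l, rfl⟩ := hsT
    exact ⟨l, by rwa [dist_eq_norm] at hdist⟩

lemma single_conj_est {y u c d : A} (hu : ‖u‖ ≤ 1) (hy : ‖y‖ ≤ 1) {κ γ : ℝ}
    (hγ0 : 0 ≤ γ) (hγ : ‖u * y * u‖ ≤ γ)
    (hc : ‖u * c - c * u‖ ≤ κ) (hd : ‖u * d - d * u‖ ≤ κ) :
    ‖u * (c * y * d) * u‖ ≤ κ * (‖c‖ + ‖d‖) + γ * (‖c‖ * ‖d‖) := by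
  have hκ0 : (0:ℝ) ≤ κ := le_trans (norm_nonneg _) hc
  have hdecomp : u * (c * y * d) * u =
      (u * c - c * u) * (y * (d * u)) + c * ((u * y) * (d * u - u * d)) +
        c * ((u * y * u) * d) := by
    noncomm_ring
  have h1 : ‖(u * c - c * u) * (y * (d * u))‖ ≤ κ * ‖d‖ := by
    calc ‖(u * c - c * u) * (y * (d * u))‖ ≤ ‖u * c - c * u‖ * ‖y * (d * u)‖ := norm_mul_le _ _
      _ ≤ κ * ‖d‖ := by
        have hyd : ‖y * (d * u)‖ ≤ ‖d‖ := by
          calc ‖y * (d * u)‖ ≤ ‖y‖ * (‖d‖ * ‖u‖) :=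
            le_trans (norm_mul_le _ _) (by gcongr; exact norm_mul_le _ _)
          _ ≤ 1 * (‖d‖ * 1) := by gcongr
          _ = ‖d‖ := by ring
        exact mul_le_mul hc hyd (norm_nonneg _) hκ0
  have h2 : ‖c * ((u * y) * (d * u - u * d))‖ ≤ ‖c‖ * κ := by
    have hmid : ‖(u * y) * (d * u - u * d)‖ ≤ κ := by
      have huy : ‖u * y‖ ≤ 1 := by
        calc ‖u * y‖ ≤ ‖u‖ * ‖y‖ := norm_mul_le _ _
          _ ≤ 1 * 1 := by gcongr
          _ = 1 := by ring
      have hsw : ‖d * u - u * d‖ ≤ κ := by rwa [norm_sub_rev]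
      calc ‖(u * y) * (d * u - u * d)‖ ≤ ‖u * y‖ * ‖d * u - u * d‖ := norm_mul_le _ _
        _ ≤ 1 * κ := mul_le_mul huy hsw (norm_nonneg _) one_pos.le
        _ = κ := by ring
    calc ‖c * ((u * y) * (d * u - u * d))‖ ≤ ‖c‖ * ‖(u * y) * (d * u - u * d)‖ := norm_mul_le _ _
      _ ≤ ‖c‖ * κ := by gcongr
  have h3 : ‖c * ((u * y * u) * d)‖ ≤ ‖c‖ * (γ * ‖d‖) := by
    calc ‖c * ((u * y * u) * d)‖ ≤ ‖c‖ * ‖(u * y * u) * d‖ := norm_mul_le _ _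
      _ ≤ ‖c‖ * (γ * ‖d‖) := by
        gcongr
        calc ‖(u * y * u) * d‖ ≤ ‖u * y * u‖ * ‖d‖ := norm_mul_le _ _
          _ ≤ γ * ‖d‖ := by gcongr
  calc ‖u * (c * y * d) * u‖ = ‖(u * c - c * u) * (y * (d * u)) +
      c * ((u * y) * (d * u - u * d)) + c * ((u * y * u) * d)‖ := by rw [hdecomp]
    _ ≤ ‖(u * c - c * u) * (y * (d * u)) + c * ((u * y) * (d * u - u * d))‖ +
        ‖c * ((u * y * u) * d)‖ := norm_add_le _ _
    _ ≤ (‖(u * c - c * u) * (y * (d * u))‖ + ‖c * ((u * y) * (d * u - u * d))‖) +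
        ‖c * ((u * y * u) * d)‖ := by gcongr; exact norm_add_le _ _
    _ ≤ (κ * ‖d‖ + ‖c‖ * κ) + ‖c‖ * (γ * ‖d‖) := by gcongr
    _ = κ * (‖c‖ + ‖d‖) + γ * (‖c‖ * ‖d‖) := by ring

lemma list_conj_est {y u : A} (hu : ‖u‖ ≤ 1) (hy : ‖y‖ ≤ 1) {κ γ : ℝ}
    (hγ0 : 0 ≤ γ) (hγ : ‖u * y * u‖ ≤ γ) (l : List (A × A))
    (hcomm : ∀ cd ∈ l, ‖u * cd.1 - cd.1 * u‖ ≤ κ ∧ ‖u * cd.2 - cd.2 * u‖ ≤ κ) :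
    ‖u * (l.map fun cd => cd.1 * y * cd.2).sum * u‖ ≤
      κ * (l.map fun cd => ‖cd.1‖ + ‖cd.2‖).sum + γ * (l.map fun cd => ‖cd.1‖ * ‖cd.2‖).sum := by
  induction l with
  | nil => simp
  | cons hd tl ih =>
    have hhd := hcomm hd (List.mem_cons_self)
    have htl := fun cd hcd => hcomm cd (List.mem_cons_of_mem hd hcd)
    have ihtl := ih htl
    simp only [List.map_cons, List.sum_cons]
    have hsplit : u * (hd.1 * y * hd.2 + (tl.map fun cd => cd.1 * y * cd.2).sum) * u =
        u * (hd.1 * y * hd.2) * u + u * (tl.map fun cd => cd.1 * y * cd.2).sum * u := by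
      noncomm_ring
    rw [hsplit]
    calc ‖u * (hd.1 * y * hd.2) * u + u * (tl.map fun cd => cd.1 * y * cd.2).sum * u‖
        ≤ ‖u * (hd.1 * y * hd.2) * u‖ + ‖u * (tl.map fun cd => cd.1 * y * cd.2).sum * u‖ :=
          norm_add_le _ _
      _ ≤ (κ * (‖hd.1‖ + ‖hd.2‖) + γ * (‖hd.1‖ * ‖hd.2‖)) +
          (κ * (tl.map fun cd => ‖cd.1‖ + ‖cd.2‖).sum +
            γ * (tl.map fun cd => ‖cd.1‖ * ‖cd.2‖).sum) := by
          gcongr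
          exact single_conj_est hu hy hγ0 hγ hhd.1 hhd.2
      _ = κ * (‖hd.1‖ + ‖hd.2‖ + (tl.map fun cd => ‖cd.1‖ + ‖cd.2‖).sum) +
          γ * (‖hd.1‖ * ‖hd.2‖ + (tl.map fun cd => ‖cd.1‖ * ‖cd.2‖).sum) := by ring

end Aux4


/-- The tracial Rokhlin property for an action `α` of a finite group `G` on a
unital C*-algebra `A` (where each `α g` is moreover assumed to be a *-automorphism). -/
def HasTracialRokhlin {A G : Type*} [CStarAlgebra A] [PartialOrder A] [StarOrderedRing A]
    [Group G] [Fintype G] (α : G →* (A ≃ₐ[ℂ] A)) : Prop :=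
  ∀ (F : Finset A) (ε : ℝ), 0 < ε → ∀ x : A, 0 ≤ x → ‖x‖ = 1 →
    ∃ f : G → A,
      (∀ g, IsProjection (f g)) ∧
      (∀ g h, g ≠ h → f g * f h = 0) ∧
      (∀ g, ∀ a ∈ F, ‖f g * a - a * f g‖ < ε) ∧
      (∀ g h, ‖α g (f h) - f (g * h)‖ < ε) ∧
      CuntzSubeq ((1 : A) - ∑ g, f g) x ∧
      1 - ε < ‖(∑ g, f g) * x * (∑ g, f g)‖

theorem tracialRokhlin_iff_ultrapower
    {A G : Type*} [CStarAlgebra A] [PartialOrder A] [StarOrderedRing A]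
    (hA : ∀ I : TwoSidedIdeal A, IsClosed (I : Set A) → I = ⊥ ∨ I = ⊤)
    [Group G] [Fintype G] (α : G →* (A ≃ₐ[ℂ] A))
    (hα : ∀ (g : G) (a : A), α g (star a) = star (α g a))
    (ω : Ultrafilter ℕ) (hω : Filter.cofinite ≤ (ω : Filter ℕ)) :
    HasTracialRokhlin α ↔
      ∀ (F : Finset A) (ε : ℝ), 0 < ε → ∀ x : A, 0 ≤ x → x ≠ 0 →
        ∃ f : G → ℕ → A,
          (∀ g k, IsProjection (f g k)) ∧
          (∀ g h, g ≠ h → ∀ k, f g k * f h k = 0) ∧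
          (∀ g, ∀ a ∈ F, ∃ L : ℝ,
            Filter.Tendsto (fun k => ‖f g k * a - a * f g k‖) (ω : Filter ℕ) (nhds L) ∧
            L < ε) ∧
          (∀ g h : G, ∃ L : ℝ,
            Filter.Tendsto (fun k => ‖α g (f h k) - f (g * h) k‖) (ω : Filter ℕ) (nhds L) ∧
            L < ε) ∧
          (∀ δ : ℝ, 0 < δ → ∃ v : ℕ → A, (∃ C : ℝ, ∀ k, ‖v k‖ ≤ C) ∧ ∃ L : ℝ,
            Filter.Tendsto
              (fun k => ‖cutDown ((1 : A) - ∑ g, f g k) ε - v k * x * star (v k)‖)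
              (ω : Filter ℕ) (nhds L) ∧ L < δ) ∧
          (∃ L : ℝ,
            Filter.Tendsto (fun k => ‖∑ g, f g k‖) (ω : Filter ℕ) (nhds L) ∧ 1 - ε < L) := by
  classical
  constructor
  · -- Forward direction
    intro hTR F ε hε x hx hxne
    have hxnorm : 0 < ‖x‖ := norm_pos_iff.mpr hxne
    set x₁ : A := ‖x‖⁻¹ • x with hx₁def
    have hx₁ : 0 ≤ x₁ := real_smul_nonneg (inv_nonneg.mpr (norm_nonneg x)) hx
    have hx₁norm : ‖x₁‖ = 1 := by
      rw [hx₁def, norm_smul, Real.norm_eq_abs, abs_of_pos (inv_pos.mpr hxnorm),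
        inv_mul_cancel₀ hxnorm.ne']
    obtain ⟨f, hproj, horth, hcomm, hcov, hcuntz, hbig⟩ := hTR F ε hε x₁ hx₁ hx₁norm
    have hfp : IsProjection (∑ g, f g) := isProjection_sum f hproj horth
    refine ⟨fun g _ => f g, fun g _ => hproj g, fun g h hgh _ => horth g h hgh, ?_, ?_, ?_, ?_⟩
    · intro g a ha
      exact ⟨_, tendsto_const_nhds, hcomm g a ha⟩
    · intro g h
      exact ⟨_, tendsto_const_nhds, hcov g h⟩
    · intro δ hδ
      obtain ⟨w, hw⟩ := hcuntz
      set C' : ℝ := max (1 - ε) 0 with hC'def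
      have hC0 : 0 ≤ C' := le_max_right _ _
      have hδ' : 0 < δ / (C' + 1) := by positivity
      have hev : ∀ᶠ n in atTop,
          ‖(1 - ∑ g, f g) - w n * x₁ * star (w n)‖ < δ / (C' + 1) :=
        hw.eventually_lt_const hδ'
      obtain ⟨n₀, hn₀⟩ := hev.exists
      set r : ℝ := C' * ‖x‖⁻¹ with hrdef
      have hr0 : 0 ≤ r := mul_nonneg hC0 (inv_nonneg.mpr (norm_nonneg x))
      set v₀ : A := Real.sqrt r • w n₀ with hv₀def
      refine ⟨fun _ => v₀, ⟨‖v₀‖, fun _ => le_rfl⟩,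
        ‖cutDown ((1 : A) - ∑ g, f g) ε - v₀ * x * star v₀‖, tendsto_const_nhds, ?_⟩
      have hcd : cutDown ((1 : A) - ∑ g, f g) ε = C' • ((1 : A) - ∑ g, f g) :=
        hfp.one_sub.cutDown_eq hε.le
      have hconj : v₀ * x * star v₀ = C' • (w n₀ * x₁ * star (w n₀)) := by
        rw [hv₀def, star_smul, star_trivial, smul_mul_assoc, smul_mul_assoc, mul_smul_comm,
          smul_smul, Real.mul_self_sqrt hr0, hx₁def, mul_smul_comm, smul_mul_assoc,
          smul_smul, hrdef]
      rw [hcd, hconj, ← smul_sub, norm_smul, Real.norm_eq_abs, abs_of_nonneg hC0]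
      calc C' * ‖(1 - ∑ g, f g) - w n₀ * x₁ * star (w n₀)‖ ≤ C' * (δ / (C' + 1)) := by
            gcongr
        _ < δ := by
            have h1 : C' * (δ / (C' + 1)) = (C' * δ) / (C' + 1) := by ring
            rw [h1, div_lt_iff₀ (by positivity)]
            nlinarith
    · refine ⟨‖∑ g, f g‖, tendsto_const_nhds, ?_⟩
      have h1 : ‖(∑ g, f g) * x₁ * (∑ g, f g)‖ ≤ ‖∑ g, f g‖ := by
        have hn1 := hfp.norm_le_one
        calc ‖(∑ g, f g) * x₁ * (∑ g, f g)‖ ≤ ‖(∑ g, f g) * x₁‖ * ‖∑ g, f g‖ := norm_mul_le _ _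
          _ ≤ ‖∑ g, f g‖ * ‖x₁‖ * ‖∑ g, f g‖ :=
            mul_le_mul_of_nonneg_right (norm_mul_le _ _) (norm_nonneg _)
          _ = ‖∑ g, f g‖ * ‖∑ g, f g‖ := by rw [hx₁norm, mul_one]
          _ ≤ ‖∑ g, f g‖ := by nlinarith [norm_nonneg (∑ g, f g)]
      linarith [hbig]
  · -- Backward direction
    intro hRHS F ε hε x hx hxnorm
    have hxsa : IsSelfAdjoint x := hx.isSelfAdjoint
    have hxne : x ≠ 0 := by
      intro h
      rw [h, norm_zero] at hxnorm
      exact one_ne_zero hxnorm.symm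
    haveI : Nontrivial A := ⟨⟨x, 0, hxne⟩⟩
    -- small parameters
    set ε₂ : ℝ := min ε (1/2) with hε₂def
    have hε₂pos : 0 < ε₂ := lt_min hε (by norm_num)
    have hε₂le : ε₂ ≤ 1/2 := min_le_right _ _
    have hε₂leε : ε₂ ≤ ε := min_le_left _ _
    set lam : ℝ := ε₂ / 2 with hlamdef
    have hlam : 0 < lam := by positivity
    have hlam4 : lam ≤ 1/4 := by rw [hlamdef]; linarith
    -- the bump function
    set bump : ℝ → ℝ := fun t => max 0 (min 1 ((2 / lam) * (t - (1 - lam)))) with hbumpdef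
    have hbumpcont : Continuous bump := by
      apply continuous_const.max
      apply continuous_const.min
      fun_prop
    have hbump0 : ∀ t, 0 ≤ bump t := fun t => le_max_left _ _
    have hbump1 : ∀ t, bump t ≤ 1 := fun t => max_le (by norm_num) (min_le_left _ _)
    have hbumpsupp : ∀ t : ℝ, bump t ≠ 0 → 1 - lam < t := by
      intro t ht
      by_contra hc
      push_neg at hc
      apply ht
      show max 0 (min 1 ((2 / lam) * (t - (1 - lam)))) = 0
      have h0 : (2 / lam) * (t - (1 - lam)) ≤ 0 := by
        apply mul_nonpos_of_nonneg_of_nonpos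
        · positivity
        · linarith
      rw [max_eq_left (le_trans (min_le_right _ _) h0)]
    have hbumptop : ∀ t : ℝ, 1 - lam/2 ≤ t → bump t = 1 := by
      intro t ht
      show max 0 (min 1 ((2 / lam) * (t - (1 - lam)))) = 1
      have h2 : lam / 2 ≤ t - (1 - lam) := by linarith
      have h1 : (1:ℝ) ≤ (2 / lam) * (t - (1 - lam)) := by
        calc (1:ℝ) = (2 / lam) * (lam / 2) := by field_simp
          _ ≤ (2 / lam) * (t - (1 - lam)) :=
            mul_le_mul_of_nonneg_left h2 (by positivity)
      rw [min_eq_left h1, max_eq_right zero_le_one]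
    set y : A := cfc bump x with hydef
    have hysa : IsSelfAdjoint y := cfc_predicate bump x
    have hynn : (0:A) ≤ y := cfc_nonneg fun t _ => hbump0 t
    have hynorm : ‖y‖ ≤ 1 := by
      rw [hydef]
      exact norm_cfc_le zero_le_one fun t _ => by
        rw [Real.norm_eq_abs, abs_of_nonneg (hbump0 t)]; exact hbump1 t
    -- spectrum of x is within (-∞, 1]
    have hspec1 : ∀ t ∈ spectrum ℝ x, t ≤ 1 := by
      intro t ht
      have h := spectrum.norm_le_norm_of_mem ht
      rw [hxnorm, Real.norm_eq_abs] at h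
      exact le_trans (le_abs_self t) h
    -- y ≠ 0 via ‖x‖ = 1
    have hyne : y ≠ 0 := by
      intro h0
      have hle : x ≤ (1 - lam/2) • (1:A) + y := by
        have hpt : ∀ t ∈ spectrum ℝ x, (id : ℝ → ℝ) t ≤ (fun t => (1 - lam/2) + bump t) t := by
          intro t ht
          simp only [id_eq]
          rcases le_or_gt t (1 - lam/2) with hc | hc
          · have := hbump0 t; linarith
          · have := hbumptop t hc.le
            rw [this]
            have := hspec1 t ht
            linarith
        have hcfc : cfc (id : ℝ → ℝ) x ≤ cfc (fun t => (1 - lam/2) + bump t) x := by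
          rw [cfc_le_iff (id : ℝ → ℝ) (fun t => (1 - lam/2) + bump t) x continuousOn_id
            (continuous_const.add hbumpcont).continuousOn hxsa]
          exact hpt
        rw [cfc_id ℝ x hxsa] at hcfc
        have hrhs : cfc (fun t => (1 - lam/2) + bump t) x = (1 - lam/2) • (1:A) + y := by
          rw [cfc_add (a := x) (f := fun _ => (1 - lam/2)) (g := bump)
            (hf := continuousOn_const) (hg := hbumpcont.continuousOn)]
          rw [cfc_const (1 - lam/2) x hxsa, Algebra.algebraMap_eq_smul_one, hydef]
        rwa [hrhs] at hcfc
      rw [h0, add_zero] at hle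
      have hnle : ‖x‖ ≤ ‖(1 - lam/2) • (1:A)‖ :=
        CStarAlgebra.norm_le_norm_of_nonneg_of_le hx hle
      rw [hxnorm, norm_smul, Real.norm_eq_abs, norm_one, mul_one,
        abs_of_nonneg (by linarith)] at hnle
      linarith
    -- fullness of y
    obtain ⟨l, hl⟩ := exists_list_approx_one hA hyne
    set Kl : ℝ := (l.map fun cd => ‖cd.1‖ + ‖cd.2‖).sum with hKldef
    set Ml : ℝ := (l.map fun cd => ‖cd.1‖ * ‖cd.2‖).sum with hMldef
    have hKl : 0 ≤ Kl := by
      rw [hKldef]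
      apply List.sum_nonneg
      intro a ha
      obtain ⟨cd, _, rfl⟩ := List.mem_map.mp ha
      positivity
    have hMl : 0 ≤ Ml := by
      rw [hMldef]
      apply List.sum_nonneg
      intro a ha
      obtain ⟨cd, _, rfl⟩ := List.mem_map.mp ha
      positivity
    set n : ℝ := (Fintype.card G : ℝ) with hndef
    have hn1 : 1 ≤ n := by
      rw [hndef]
      exact_mod_cast Fintype.card_pos
    -- choice of ε₁
    set ε₁ : ℝ := min (ε/2) (min (1/8) (ε₂ / (48 * n * (Kl + Ml + 1)))) with hε₁def
    have hε₁pos : 0 < ε₁ := by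
      apply lt_min (by positivity)
      apply lt_min (by norm_num)
      positivity
    have hε₁ltε : ε₁ < ε := lt_of_le_of_lt (min_le_left _ _) (by linarith)
    have hε₁le18 : ε₁ ≤ 1/8 := le_trans (min_le_right _ _) (min_le_left _ _)
    have hε₁key : n * ε₁ ≤ ε₂ / (48 * (Kl + Ml + 1)) := by
      have h1 : ε₁ ≤ ε₂ / (48 * n * (Kl + Ml + 1)) :=
        le_trans (min_le_right _ _) (min_le_right _ _)
      have h2 : n * ε₁ ≤ n * (ε₂ / (48 * n * (Kl + Ml + 1))) := by
        apply mul_le_mul_of_nonneg_left h1 (by linarith)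
      have h3 : n * (ε₂ / (48 * n * (Kl + Ml + 1))) = ε₂ / (48 * (Kl + Ml + 1)) := by
        field_simp
      linarith [h2, h3.le, h3.ge]
    -- square root of the bump
    set yh : A := cfc (fun t => Real.sqrt (bump t)) x with hyhdef
    have hyhsa : IsSelfAdjoint yh := cfc_predicate _ x
    have hyhcont : ContinuousOn (fun t => Real.sqrt (bump t)) (spectrum ℝ x) :=
      (Real.continuous_sqrt.comp hbumpcont).continuousOn
    have hyhnorm : ‖yh‖ ≤ 1 := by
      rw [hyhdef]
      refine norm_cfc_le zero_le_one fun t _ => ?_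
      rw [Real.norm_eq_abs, abs_of_nonneg (Real.sqrt_nonneg _)]
      rw [show (1:ℝ) = Real.sqrt 1 by simp]
      exact Real.sqrt_le_sqrt (hbump1 t)
    have hyh_mul : yh * yh = y := by
      rw [hyhdef, ← cfc_mul _ _ x hyhcont hyhcont, hydef]
      exact cfc_congr fun t _ => Real.mul_self_sqrt (hbump0 t)
    -- the finite set to feed the hypothesis
    set Fc : Finset A := ((F ∪ {x, y, yh}) ∪ (l.map Prod.fst).toFinset) ∪
      (l.map Prod.snd).toFinset with hFcdef
    have hFsub : F ⊆ Fc := by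
      intro a ha
      simp only [hFcdef, Finset.mem_union]
      exact Or.inl (Or.inl (Or.inl ha))
    have hxFc : x ∈ Fc := by
      simp only [hFcdef, Finset.mem_union, Finset.mem_insert]
      exact Or.inl (Or.inl (Or.inr (by simp)))
    have hyFc : y ∈ Fc := by
      simp only [hFcdef, Finset.mem_union, Finset.mem_insert]
      exact Or.inl (Or.inl (Or.inr (by simp)))
    have hyhFc : yh ∈ Fc := by
      simp only [hFcdef, Finset.mem_union, Finset.mem_insert]
      exact Or.inl (Or.inl (Or.inr (by simp)))
    have hlFc : ∀ cd ∈ l, cd.1 ∈ Fc ∧ cd.2 ∈ Fc := by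
      intro cd hcd
      constructor
      · simp only [hFcdef, Finset.mem_union]
        exact Or.inl (Or.inr (List.mem_toFinset.mpr (List.mem_map.mpr ⟨cd, hcd, rfl⟩)))
      · simp only [hFcdef, Finset.mem_union]
        exact Or.inr (List.mem_toFinset.mpr (List.mem_map.mpr ⟨cd, hcd, rfl⟩))
    -- invoke the hypothesis
    obtain ⟨f, hproj, horth, hcommL, hcovL, hcutL, hbigL⟩ := hRHS Fc ε₁ hε₁pos x hx hxne
    -- eventual properties along the ultrafilter
    have hev1 : ∀ᶠ k in (ω : Filter ℕ), ∀ g' : G, ∀ a ∈ Fc, ‖f g' k * a - a * f g' k‖ < ε₁ := by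
      rw [Filter.eventually_all]
      intro g'
      rw [Filter.eventually_all_finset]
      intro a ha
      obtain ⟨L, hL, hLε⟩ := hcommL g' a ha
      exact hL.eventually_lt_const hLε
    have hev2 : ∀ᶠ k in (ω : Filter ℕ), ∀ g' h' : G,
        ‖α g' (f h' k) - f (g' * h') k‖ < ε₁ := by
      rw [Filter.eventually_all]
      intro g'
      rw [Filter.eventually_all]
      intro h'
      obtain ⟨L, hL, hLε⟩ := hcovL g' h'
      exact hL.eventually_lt_const hLε
    have hev3 : ∀ᶠ k in (ω : Filter ℕ), 1 - ε₁ < ‖∑ g', f g' k‖ := by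
      obtain ⟨L, hL, hLε⟩ := hbigL
      exact hL.eventually_const_lt hLε
    have hδ₀ : (0:ℝ) < (1 - ε₁)/2 := by linarith
    obtain ⟨v, hvC, L₄, hL₄, hL₄δ⟩ := hcutL ((1 - ε₁)/2) hδ₀
    have hev4 : ∀ᶠ k in (ω : Filter ℕ),
        ‖cutDown ((1 : A) - ∑ g', f g' k) ε₁ - v k * x * star (v k)‖ < (1 - ε₁)/2 :=
      hL₄.eventually_lt_const hL₄δ
    obtain ⟨k₀, hk₁, hk₂, hk₃, hk₄⟩ := (hev1.and (hev2.and (hev3.and hev4))).exists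
    -- the chosen projections
    set P : G → A := fun g' => f g' k₀ with hPdef
    have hPproj : ∀ g', IsProjection (P g') := fun g' => hproj g' k₀
    have hPorth : ∀ g' h', g' ≠ h' → P g' * P h' = 0 := fun g' h' hne => horth g' h' hne k₀
    set fbar : A := ∑ g', P g' with hfbardef
    have hfbarproj : IsProjection fbar := isProjection_sum P hPproj hPorth
    have hfbarsa : IsSelfAdjoint fbar := hfbarproj.isSelfAdjoint
    have hfbarnorm : ‖fbar‖ ≤ 1 := hfbarproj.norm_le_one
    have hfbarnn : (0:A) ≤ fbar := hfbarproj.nonneg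
    -- commutator bound for the sum
    have hfcomm : ∀ a ∈ Fc, ‖fbar * a - a * fbar‖ ≤ n * ε₁ := by
      intro a ha
      have hsplit : fbar * a - a * fbar = ∑ g', (P g' * a - a * P g') := by
        rw [hfbardef, Finset.sum_mul, Finset.mul_sum, ← Finset.sum_sub_distrib]
      rw [hsplit]
      calc ‖∑ g', (P g' * a - a * P g')‖ ≤ ∑ g', ‖P g' * a - a * P g'‖ :=
          norm_sum_le _ _
        _ ≤ ∑ _g' : G, ε₁ := Finset.sum_le_sum fun g' _ => (hk₁ g' a ha).le
        _ = n * ε₁ := by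
          rw [Finset.sum_const, Finset.card_univ, nsmul_eq_mul, hndef]
    set κ : ℝ := n * ε₁ with hκdef
    have hκ0 : 0 ≤ κ := by positivity
    -- assemble the witness
    refine ⟨P, ?_, ?_, ?_, ?_, ?_⟩
    · intro g'
      exact hPproj g'
    · intro g' h' hne
      exact hPorth g' h' hne
    · intro g' a ha
      exact lt_trans (hk₁ g' a (hFsub ha)) hε₁ltε
    · intro g' h'
      exact lt_trans (hk₂ g' h') hε₁ltε
    · constructor
      · -- Cuntz subequivalence
        have hp : IsProjection ((1:A) - ∑ g', P g') := hfbarproj.one_sub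
        have hcd : cutDown ((1:A) - ∑ g', f g' k₀) ε₁ = (1 - ε₁) • ((1:A) - ∑ g', P g') := by
          have := hp.cutDown_eq hε₁pos.le
          rw [max_eq_left (by linarith : (0:ℝ) ≤ 1 - ε₁)] at this
          exact this
        have hclose : ‖(1 - ε₁) • ((1:A) - ∑ g', P g') - v k₀ * x * star (v k₀)‖
            < (1 - ε₁)/2 := by
          rw [← hcd]
          exact hk₄
        obtain ⟨w, hw⟩ := exists_conj_eq hp hx (by linarith : (0:ℝ) < 1 - ε₁) hclose
        refine ⟨fun _ => w, ?_⟩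
        have : (fun _ : ℕ => ‖(1:A) - ∑ g', P g' - w * x * star w‖) = fun _ => 0 := by
          funext _
          rw [← hw, sub_self, norm_zero]
        rw [this]
        exact tendsto_const_nhds
      · -- the key norm lower bound
        by_contra hcon
        push_neg at hcon
        have hcon' : ‖fbar * x * fbar‖ ≤ 1 - ε₂ := by
          calc ‖fbar * x * fbar‖ ≤ 1 - ε := by rw [hfbardef] at *; exact hcon
            _ ≤ 1 - ε₂ := by linarith
        set γ : ℝ := ‖fbar * y * fbar‖ with hγdef
        have hγ0 : 0 ≤ γ := norm_nonneg _
        -- Step A : fullness estimate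
        set s : A := (l.map fun cd => cd.1 * y * cd.2).sum with hsdef
        have hstepA : ‖fbar‖ ≤ 1/4 + (κ * Kl + γ * Ml) := by
          have hdecomp : fbar = fbar * (1 - s) * fbar + fbar * s * fbar := by
            have h1 : fbar * fbar = fbar := hfbarproj.2
            have h2 : fbar * (1 - s) * fbar + fbar * s * fbar = fbar * fbar := by noncomm_ring
            rw [h2, h1]
          have h2 : ‖fbar * (1 - s) * fbar‖ ≤ 1/4 := by
            calc ‖fbar * (1 - s) * fbar‖ ≤ ‖fbar * (1 - s)‖ * ‖fbar‖ := norm_mul_le _ _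
              _ ≤ ‖fbar‖ * ‖1 - s‖ * ‖fbar‖ :=
                mul_le_mul_of_nonneg_right (norm_mul_le _ _) (norm_nonneg _)
              _ ≤ 1 * ‖1 - s‖ * 1 := by gcongr
              _ = ‖1 - s‖ := by ring
              _ ≤ 1/4 := hl.le
          have h3 : ‖fbar * s * fbar‖ ≤ κ * Kl + γ * Ml := by
            rw [hsdef, hKldef, hMldef]
            apply list_conj_est hfbarnorm hynorm hγ0 le_rfl
            intro cd hcd
            obtain ⟨hcd1, hcd2⟩ := hlFc cd hcd
            exact ⟨hfcomm cd.1 hcd1, hfcomm cd.2 hcd2⟩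
          calc ‖fbar‖ = ‖fbar * (1 - s) * fbar + fbar * s * fbar‖ := by rw [← hdecomp]
            _ ≤ ‖fbar * (1 - s) * fbar‖ + ‖fbar * s * fbar‖ := norm_add_le _ _
            _ ≤ 1/4 + (κ * Kl + γ * Ml) := by linarith
        -- Step B : γ is small
        have hstepB : γ * (ε₂ / 2) ≤ 3 * κ := by
          -- (1-lam) • y ≤ yh * x * yh
          have hyxy : (1 - lam) • y ≤ yh * x * yh := by
            have e1 : cfc (fun t : ℝ => Real.sqrt (bump t) * t) x
                = cfc (fun t : ℝ => Real.sqrt (bump t)) x * cfc (fun t : ℝ => t) x :=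
              cfc_mul (fun t : ℝ => Real.sqrt (bump t)) (fun t : ℝ => t) x
                hyhcont continuous_id.continuousOn
            have e2 : cfc (fun t : ℝ => Real.sqrt (bump t) * t * Real.sqrt (bump t)) x
                = cfc (fun t : ℝ => Real.sqrt (bump t) * t) x *
                    cfc (fun t : ℝ => Real.sqrt (bump t)) x :=
              cfc_mul (fun t : ℝ => Real.sqrt (bump t) * t) (fun t : ℝ => Real.sqrt (bump t)) x
                (hyhcont.mul continuous_id.continuousOn) hyhcont
            have h1 : yh * x * yh
                = cfc (fun t : ℝ => Real.sqrt (bump t) * t * Real.sqrt (bump t)) x := by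
              rw [e2, e1, cfc_id' ℝ x hxsa, ← hyhdef]
            have h2 : (1 - lam) • y = cfc (fun t => (1 - lam) * bump t) x := by
              rw [hydef, ← cfc_smul (1 - lam) bump x hbumpcont.continuousOn]
              exact cfc_congr fun t _ => by rw [smul_eq_mul]
            rw [h1, h2]
            rw [cfc_le_iff (fun t => (1 - lam) * bump t)
              (fun t => Real.sqrt (bump t) * t * Real.sqrt (bump t)) x (continuous_const.mul hbumpcont).continuousOn
              (((hyhcont.mul continuous_id.continuousOn :
                  ContinuousOn (fun t : ℝ => Real.sqrt (bump t) * t) _)).mul hyhcont) hxsa]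
            intro t _
            rcases eq_or_ne (bump t) 0 with h0 | h0
            · rw [h0]
              simp
            · have htlam : 1 - lam < t := hbumpsupp t h0
              have hb0 := hbump0 t
              have : Real.sqrt (bump t) * t * Real.sqrt (bump t) = bump t * t := by
                rw [mul_comm (Real.sqrt (bump t)) t, mul_assoc, Real.mul_self_sqrt hb0]
                ring
              rw [this]
              nlinarith
          -- norm lower bound
          have hB1 : (1 - lam) * γ ≤ ‖fbar * (yh * x * yh) * fbar‖ := by
            have hle : (1 - lam) • (fbar * y * fbar) ≤ fbar * (yh * x * yh) * fbar := by
              have := star_left_conjugate_le_conjugate hyxy fbar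
              rw [hfbarsa.star_eq] at this
              have heq : fbar * ((1 - lam) • y) * fbar = (1 - lam) • (fbar * y * fbar) := by
                rw [mul_smul_comm, smul_mul_assoc]
              rwa [heq] at this
            have hnn : (0:A) ≤ (1 - lam) • (fbar * y * fbar) := by
              apply real_smul_nonneg (by linarith)
              have := star_left_conjugate_nonneg hynn fbar
              rwa [hfbarsa.star_eq] at this
            have := CStarAlgebra.norm_le_norm_of_nonneg_of_le hnn hle
            rwa [norm_smul, Real.norm_eq_abs, abs_of_nonneg (by linarith : (0:ℝ) ≤ 1 - lam),
              ← hγdef] at this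
          -- swap estimate
          have hD : ‖yh * fbar - fbar * yh‖ ≤ κ := by
            rw [norm_sub_rev]
            exact hfcomm yh hyhFc
          have hB2 : ‖yh * (fbar * x * fbar) * yh - fbar * (yh * x * yh) * fbar‖ ≤ 3 * κ := by
            have hiden : yh * (fbar * x * fbar) * yh - fbar * (yh * x * yh) * fbar =
                (yh * fbar - fbar * yh) * (x * (fbar * yh)) -
                  (fbar * yh) * (x * (yh * fbar - fbar * yh)) := by
              noncomm_ring
            rw [hiden]
            have hfy : ‖fbar * yh‖ ≤ 1 := by
              calc ‖fbar * yh‖ ≤ ‖fbar‖ * ‖yh‖ := norm_mul_le _ _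
                _ ≤ 1 * 1 := by gcongr
                _ = 1 := by ring
            have ht1 : ‖(yh * fbar - fbar * yh) * (x * (fbar * yh))‖ ≤ κ := by
              calc ‖(yh * fbar - fbar * yh) * (x * (fbar * yh))‖
                  ≤ ‖yh * fbar - fbar * yh‖ * ‖x * (fbar * yh)‖ := norm_mul_le _ _
                _ ≤ κ * 1 := by
                  apply mul_le_mul hD ?_ (norm_nonneg _) hκ0
                  calc ‖x * (fbar * yh)‖ ≤ ‖x‖ * ‖fbar * yh‖ := norm_mul_le _ _
                    _ ≤ 1 * 1 := by rw [hxnorm]; gcongr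
                    _ = 1 := by ring
                _ = κ := by ring
            have ht2 : ‖(fbar * yh) * (x * (yh * fbar - fbar * yh))‖ ≤ κ := by
              calc ‖(fbar * yh) * (x * (yh * fbar - fbar * yh))‖
                  ≤ ‖fbar * yh‖ * ‖x * (yh * fbar - fbar * yh)‖ := norm_mul_le _ _
                _ ≤ 1 * κ := by
                  apply mul_le_mul hfy ?_ (norm_nonneg _) one_pos.le
                  calc ‖x * (yh * fbar - fbar * yh)‖
                      ≤ ‖x‖ * ‖yh * fbar - fbar * yh‖ := norm_mul_le _ _
                    _ ≤ 1 * κ := by rw [hxnorm]; gcongr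
                    _ = κ := by ring
                _ = κ := by ring
            calc ‖(yh * fbar - fbar * yh) * (x * (fbar * yh)) -
                (fbar * yh) * (x * (yh * fbar - fbar * yh))‖
                ≤ ‖(yh * fbar - fbar * yh) * (x * (fbar * yh))‖ +
                  ‖(fbar * yh) * (x * (yh * fbar - fbar * yh))‖ := norm_sub_le _ _
              _ ≤ κ + κ := by linarith
              _ ≤ 3 * κ := by linarith
          -- the compressed element is small
          have hB3 : ‖yh * (fbar * x * fbar) * yh‖ ≤ (1 - ε₂) * γ := by
            have hfxf1 : fbar * x * fbar ≤ ‖fbar * x * fbar‖ • fbar := by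
              have h0 : fbar * x * fbar ≤ ‖fbar * x * fbar‖ • (1:A) := by
                have hsafxf : IsSelfAdjoint (fbar * x * fbar) := by
                  rw [IsSelfAdjoint]
                  simp only [star_mul, hfbarsa.star_eq, hxsa.star_eq, mul_assoc]
                have := hsafxf.le_algebraMap_norm_self
                rwa [Algebra.algebraMap_eq_smul_one] at this
              have := star_left_conjugate_le_conjugate h0 fbar
              rw [hfbarsa.star_eq] at this
              have heq1 : fbar * (fbar * x * fbar) * fbar = fbar * x * fbar := by
                have hh : fbar * (fbar * x * fbar) * fbar
                    = (fbar * fbar) * x * (fbar * fbar) := by noncomm_ring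
                rw [hh, hfbarproj.2]
              have heq2 : fbar * (‖fbar * x * fbar‖ • (1:A)) * fbar
                  = ‖fbar * x * fbar‖ • fbar := by
                rw [mul_smul_comm, smul_mul_assoc, mul_one, hfbarproj.2]
              rwa [heq1, heq2] at this
            have hfxf : fbar * x * fbar ≤ (1 - ε₂) • fbar := by
              have hsub : (0:A) ≤ (1 - ε₂) • fbar - ‖fbar * x * fbar‖ • fbar := by
                rw [← sub_smul]
                apply real_smul_nonneg (by linarith) hfbarnn
              calc fbar * x * fbar ≤ ‖fbar * x * fbar‖ • fbar := hfxf1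
                _ ≤ (1 - ε₂) • fbar := sub_nonneg.mp hsub
            have hconj : yh * (fbar * x * fbar) * yh ≤ (1 - ε₂) • (yh * fbar * yh) := by
              have := star_left_conjugate_le_conjugate hfxf yh
              rw [hyhsa.star_eq] at this
              have heq : yh * ((1 - ε₂) • fbar) * yh = (1 - ε₂) • (yh * fbar * yh) := by
                rw [mul_smul_comm, smul_mul_assoc]
              rwa [heq] at this
            have hnn : (0:A) ≤ yh * (fbar * x * fbar) * yh := by
              have hxf : (0:A) ≤ fbar * x * fbar := by
                have := star_left_conjugate_nonneg hx fbar
                rwa [hfbarsa.star_eq] at this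
              have := star_left_conjugate_nonneg hxf yh
              rwa [hyhsa.star_eq] at this
            have hnorm1 := CStarAlgebra.norm_le_norm_of_nonneg_of_le hnn hconj
            have heqγ : ‖yh * fbar * yh‖ = γ := by
              have e1 : yh * fbar * yh = (yh * fbar) * star (yh * fbar) := by
                rw [star_mul, hyhsa.star_eq, hfbarsa.star_eq]
                calc yh * fbar * yh = yh * (fbar * fbar) * yh := by rw [hfbarproj.2]
                  _ = (yh * fbar) * (fbar * yh) := by noncomm_ring
              have e2 : fbar * y * fbar = star (yh * fbar) * (yh * fbar) := by
                rw [star_mul, hyhsa.star_eq, hfbarsa.star_eq]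
                calc fbar * y * fbar = fbar * (yh * yh) * fbar := by rw [hyh_mul]
                  _ = (fbar * yh) * (yh * fbar) := by noncomm_ring
              rw [hγdef, e1, e2, CStarRing.norm_self_mul_star, CStarRing.norm_star_mul_self]
            calc ‖yh * (fbar * x * fbar) * yh‖ ≤ ‖(1 - ε₂) • (yh * fbar * yh)‖ := hnorm1
              _ = (1 - ε₂) * γ := by
                rw [norm_smul, Real.norm_eq_abs, abs_of_nonneg (by linarith : (0:ℝ) ≤ 1 - ε₂),
                  heqγ]
          -- combine
          have hchain : (1 - lam) * γ ≤ (1 - ε₂) * γ + 3 * κ := by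
            have htri : ‖fbar * (yh * x * yh) * fbar‖ ≤
                ‖yh * (fbar * x * fbar) * yh‖ +
                  ‖yh * (fbar * x * fbar) * yh - fbar * (yh * x * yh) * fbar‖ := by
              calc ‖fbar * (yh * x * yh) * fbar‖
                  = ‖yh * (fbar * x * fbar) * yh -
                      (yh * (fbar * x * fbar) * yh - fbar * (yh * x * yh) * fbar)‖ := by
                    congr 1
                    abel
                _ ≤ _ := norm_sub_le _ _
            linarith [hB1, hB2, hB3, htri]
          rw [hlamdef] at hchain
          nlinarith
        -- final numeric contradiction
        have hκval : κ ≤ ε₂ / (48 * (Kl + Ml + 1)) := hε₁key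
        have hKM1 : (0:ℝ) < Kl + Ml + 1 := by linarith
        have hbound1 : κ * Kl ≤ 1/96 := by
          have h1 : κ * Kl ≤ (ε₂ / (48 * (Kl + Ml + 1))) * Kl :=
            mul_le_mul_of_nonneg_right hκval hKl
          have h2 : (ε₂ / (48 * (Kl + Ml + 1))) * Kl ≤ 1/96 := by
            rw [div_mul_eq_mul_div, div_le_iff₀ (by positivity)]
            nlinarith
          linarith
        have hbound2 : γ * Ml ≤ 1/8 := by
          have h1 : κ * Ml ≤ ε₂ / 48 := by
            have := mul_le_mul_of_nonneg_right hκval hMl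
            have h2 : (ε₂ / (48 * (Kl + Ml + 1))) * Ml ≤ ε₂ / 48 := by
              rw [div_mul_eq_mul_div, div_le_div_iff₀ (by positivity) (by norm_num)]
              nlinarith
            linarith
          have h3 : γ * Ml * (ε₂ / 2) ≤ 3 * (ε₂ / 48) := by
            calc γ * Ml * (ε₂ / 2) = (γ * (ε₂ / 2)) * Ml := by ring
              _ ≤ (3 * κ) * Ml := mul_le_mul_of_nonneg_right hstepB hMl
              _ = 3 * (κ * Ml) := by ring
              _ ≤ 3 * (ε₂ / 48) := by linarith
          have h4 : γ * Ml * (ε₂ / 2) ≤ (1/8) * (ε₂ / 2) := by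
            calc γ * Ml * (ε₂ / 2) ≤ 3 * (ε₂ / 48) := h3
              _ = (1/8) * (ε₂ / 2) := by ring
          exact le_of_mul_le_mul_right h4 (by positivity)
        have : 1 - ε₁ < ‖fbar‖ := by
          rw [hfbardef]
          exact hk₃
        linarith [hstepA, hε₁le18, hbound1, hbound2]
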